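/- arXiv:2304.06938 — 4 statements merged into one kernel-verified Lean document; each statement's English description precedes it below -/
import Mathlib

section
/- If X and Y are comonotonic real random variables (i.e., (X(ω)-X(ω'))(Y(ω)-Y(ω')) ≥ 0 for P×P-almost every (ω,ω')), then the quantile function of X+Y equals the sum of the quantile functions of X and Y almost everywhere on (0,1): Q_{X+Y} = Q_X + Q_Y a.e. -/
noncomputable def quantile {Ω : Type*} [MeasurableSpace Ω] (P : MeasureTheory.Measure Ω) (Y : Ω → ℝ) (t : ℝ) : ℝ :=
  sInf {z : ℝ | P {ω | Y ω ≤ z} > ENNReal.ofReal t}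

open MeasureTheory Filter Topology Set

section aux

variable {Ω : Type*} [MeasurableSpace Ω] (P : MeasureTheory.Measure Ω)
  [IsProbabilityMeasure P] {Z : Ω → ℝ} {t : ℝ}

lemma qset_nonempty (ht1 : t < 1) :
    {z : ℝ | P {ω | Z ω ≤ z} > ENNReal.ofReal t}.Nonempty := by
  have hmono : Monotone (fun n : ℕ => {ω | Z ω ≤ (n : ℝ)}) := by
    intro m n hmn ω hω
    simp only [mem_setOf_eq] at hω ⊢
    exact hω.trans (Nat.cast_le.2 hmn)
  have hU : (⋃ n : ℕ, {ω | Z ω ≤ (n : ℝ)}) = univ := by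
    ext ω
    simp only [mem_iUnion, mem_univ, iff_true, mem_setOf_eq]
    exact exists_nat_ge (Z ω)
  have htend := tendsto_measure_iUnion_atTop (μ := P) hmono
  rw [hU, measure_univ] at htend
  have hlt : ENNReal.ofReal t < 1 := ENNReal.ofReal_lt_one.2 ht1
  obtain ⟨n, hn⟩ := (htend.eventually (eventually_gt_nhds hlt)).exists
  exact ⟨n, hn⟩

lemma qset_bddBelow (hZ : Measurable Z) (ht0 : 0 < t) :
    BddBelow {z : ℝ | P {ω | Z ω ≤ z} > ENNReal.ofReal t} := by
  have hanti : Antitone (fun n : ℕ => {ω | Z ω ≤ -(n : ℝ)}) := by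
    intro m n hmn ω hω
    simp only [mem_setOf_eq] at hω ⊢
    have : (m : ℝ) ≤ (n : ℝ) := Nat.cast_le.2 hmn
    linarith
  have hI : (⋂ n : ℕ, {ω | Z ω ≤ -(n : ℝ)}) = ∅ := by
    ext ω
    simp only [mem_iInter, mem_empty_iff_false, iff_false, not_forall, mem_setOf_eq]
    obtain ⟨n, hn⟩ := exists_nat_gt (-(Z ω))
    exact ⟨n, by push_neg; linarith⟩
  have hms : ∀ n : ℕ, NullMeasurableSet {ω | Z ω ≤ -(n : ℝ)} P := fun n =>
    (show MeasurableSet {ω | Z ω ≤ -(n : ℝ)} from hZ measurableSet_Iic).nullMeasurableSet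
  have htend := tendsto_measure_iInter_atTop (μ := P) hms hanti ⟨0, measure_ne_top _ _⟩
  rw [hI, measure_empty] at htend
  have hpos : (0 : ENNReal) < ENNReal.ofReal t := ENNReal.ofReal_pos.2 ht0
  obtain ⟨n, hn⟩ := (htend.eventually (eventually_lt_nhds hpos)).exists
  refine ⟨-(n : ℝ), fun z hz => ?_⟩
  by_contra hlt
  push_neg at hlt
  have hle : P {ω | Z ω ≤ z} ≤ P {ω | Z ω ≤ -(n : ℝ)} :=
    measure_mono (fun ω hω => le_trans hω hlt.le)
  exact absurd (lt_of_lt_of_le hz hle) (not_lt.2 hn.le)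

lemma measure_le_of_lt_quantile (hZ : Measurable Z) (ht0 : 0 < t) {z : ℝ}
    (hz : z < quantile P Z t) : P {ω | Z ω ≤ z} ≤ ENNReal.ofReal t := by
  by_contra h
  push_neg at h
  exact absurd (csInf_le (qset_bddBelow P hZ ht0) h) (not_le.2 hz)

lemma measure_gt_of_quantile_lt (hZ : Measurable Z) (ht0 : 0 < t) (ht1 : t < 1) {z : ℝ}
    (hz : quantile P Z t < z) : ENNReal.ofReal t < P {ω | Z ω ≤ z} := by
  obtain ⟨w, hw, hwz⟩ := (csInf_lt_iff (qset_bddBelow P hZ ht0)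
    (qset_nonempty P ht1)).1 hz
  exact lt_of_lt_of_le hw (measure_mono (fun ω hω => le_trans hω hwz.le))

lemma le_quantile (ht1 : t < 1) {c : ℝ}
    (h : ∀ z, z < c → P {ω | Z ω ≤ z} ≤ ENNReal.ofReal t) : c ≤ quantile P Z t := by
  refine le_csInf (qset_nonempty P ht1) (fun z hz => ?_)
  by_contra hlt
  push_neg at hlt
  exact absurd hz (not_lt.2 (h z hlt))

lemma quantile_le (hZ : Measurable Z) (ht0 : 0 < t) {c : ℝ}
    (h : ∀ z, c < z → ENNReal.ofReal t < P {ω | Z ω ≤ z}) : quantile P Z t ≤ c := by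
  refine le_of_forall_pos_le_add (fun ε hε => ?_)
  exact csInf_le (qset_bddBelow P hZ ht0) (h _ (by linarith))

lemma measure_lt_quantile_le (hZ : Measurable Z) (ht0 : 0 < t) :
    P {ω | Z ω < quantile P Z t} ≤ ENNReal.ofReal t := by
  set c := quantile P Z t
  have hmono : Monotone (fun n : ℕ => {ω | Z ω ≤ c - 1/((n:ℝ)+1)}) := by
    intro m n hmn ω hω
    simp only [mem_setOf_eq] at hω ⊢
    have hc : (m : ℝ) ≤ (n : ℝ) := Nat.cast_le.2 hmn
    have h1 : (1 : ℝ)/((n:ℝ)+1) ≤ 1/((m:ℝ)+1) := by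
      apply one_div_le_one_div_of_le
      · positivity
      · linarith
    linarith
  have hU : {ω | Z ω < c} = ⋃ n : ℕ, {ω | Z ω ≤ c - 1/((n:ℝ)+1)} := by
    ext ω
    simp only [mem_iUnion, mem_setOf_eq]
    constructor
    · intro hω
      obtain ⟨n, hn⟩ := exists_nat_one_div_lt (sub_pos.2 hω)
      exact ⟨n, by linarith⟩
    · rintro ⟨n, hn⟩
      have : (0:ℝ) < 1/((n:ℝ)+1) := by positivity
      linarith
  have htend := tendsto_measure_iUnion_atTop (μ := P) hmono
  rw [← hU] at htend
  refine le_of_tendsto' htend (fun n => ?_)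
  refine measure_le_of_lt_quantile P hZ ht0 ?_
  have : (0:ℝ) < 1/((n:ℝ)+1) := by positivity
  linarith

end aux

section support

variable (μ : MeasureTheory.Measure (ℝ × ℝ))

/-- points all of whose open neighborhoods have positive measure -/
def msupp : Set (ℝ × ℝ) := {p : ℝ × ℝ | ∀ U : Set (ℝ × ℝ), IsOpen U → p ∈ U → 0 < μ U}

lemma measure_compl_msupp : μ (msupp μ)ᶜ = 0 := by
  have hcov : ∀ p : ↥(msupp μ)ᶜ, ∃ U : Set (ℝ × ℝ), IsOpen U ∧ (p : ℝ × ℝ) ∈ U ∧ μ U = 0 := by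
    rintro ⟨p, hp⟩
    simp only [msupp, mem_compl_iff, mem_setOf_eq, not_forall] at hp
    obtain ⟨U, hUo, hpU, hU0⟩ := hp
    exact ⟨U, hUo, hpU, le_antisymm (not_lt.1 hU0) zero_le⟩
  choose U hUo hpU hU0 using hcov
  obtain ⟨T, hTc, hTU⟩ := TopologicalSpace.isOpen_iUnion_countable U hUo
  have hsub : (msupp μ)ᶜ ⊆ ⋃ i ∈ T, U i := by
    intro p hp
    rw [hTU]
    exact mem_iUnion.2 ⟨⟨p, hp⟩, hpU _⟩
  refine le_antisymm (le_trans (measure_mono hsub) ?_) zero_le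
  refine le_trans (measure_biUnion_le μ hTc U) ?_
  simp [hU0]

lemma msupp_comonotone [MeasureTheory.SFinite μ]
    (hbad : (μ.prod μ) {q : (ℝ × ℝ) × (ℝ × ℝ) | (q.1.1 - q.2.1) * (q.1.2 - q.2.2) < 0} = 0)
    {p q : ℝ × ℝ} (hp : p ∈ msupp μ) (hq : q ∈ msupp μ) :
    0 ≤ (p.1 - q.1) * (p.2 - q.2) := by
  by_contra h
  push_neg at h
  have hopen : IsOpen {r : (ℝ × ℝ) × (ℝ × ℝ) | (r.1.1 - r.2.1) * (r.1.2 - r.2.2) < 0} := by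
    have hcont : Continuous fun r : (ℝ × ℝ) × (ℝ × ℝ) => (r.1.1 - r.2.1) * (r.1.2 - r.2.2) := by
      fun_prop
    exact isOpen_lt hcont continuous_const
  obtain ⟨u, v, hu, hv, hpu, hqv, huv⟩ := isOpen_prod_iff.1 hopen p q h
  have hμu : 0 < μ u := hp u hu hpu
  have hμv : 0 < μ v := hq v hv hqv
  have hlt : 0 < (μ.prod μ) (u ×ˢ v) := by
    rw [Measure.prod_prod]
    exact ENNReal.mul_pos hμu.ne' hμv.ne'
  exact absurd (le_trans (measure_mono huv) (le_of_eq hbad)) (not_le.2 hlt)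

end support

theorem stmt_5 {Ω : Type*} [MeasurableSpace Ω] (P : MeasureTheory.Measure Ω)
    [MeasureTheory.IsProbabilityMeasure P] (X Y : Ω → ℝ)
    (hX : Measurable X) (hY : Measurable Y)
    (hcom : ∀ᵐ p : Ω × Ω ∂(P.prod P), 0 ≤ (X p.1 - X p.2) * (Y p.1 - Y p.2)) :
    ∀ᵐ t ∂(MeasureTheory.volume.restrict (Set.Ioo (0:ℝ) 1)),
      quantile P (fun ω => X ω + Y ω) t = quantile P X t + quantile P Y t := by
  classical
  set f : Ω → ℝ × ℝ := fun ω => (X ω, Y ω) with hf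
  have hfm : Measurable f := hX.prodMk hY
  set μ : Measure (ℝ × ℝ) := P.map f with hμ
  haveI : IsProbabilityMeasure μ := Measure.isProbabilityMeasure_map hfm.aemeasurable
  -- bad set has product measure zero
  have hbad : (μ.prod μ) {q : (ℝ × ℝ) × (ℝ × ℝ) | (q.1.1 - q.2.1) * (q.1.2 - q.2.2) < 0} = 0 := by
    have hmap : μ.prod μ = (P.prod P).map (Prod.map f f) :=
      Measure.map_prod_map P P hfm hfm
    have hmeas : MeasurableSet {q : (ℝ × ℝ) × (ℝ × ℝ) | (q.1.1 - q.2.1) * (q.1.2 - q.2.2) < 0} := by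
      have hcont : Continuous fun r : (ℝ × ℝ) × (ℝ × ℝ) => (r.1.1 - r.2.1) * (r.1.2 - r.2.2) := by
        fun_prop
      exact (isOpen_lt hcont continuous_const).measurableSet
    rw [hmap, Measure.map_apply (hfm.prodMap hfm) hmeas]
    have hpre : (Prod.map f f) ⁻¹' {q : (ℝ × ℝ) × (ℝ × ℝ) | (q.1.1 - q.2.1) * (q.1.2 - q.2.2) < 0}
        = {p : Ω × Ω | (X p.1 - X p.2) * (Y p.1 - Y p.2) < 0} := rfl
    rw [hpre]
    have hae := hcom
    rw [ae_iff] at hae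
    convert hae using 2
    ext p
    simp [not_le]
  have hchain : ∀ p ∈ msupp μ, ∀ q ∈ msupp μ, 0 ≤ (p.1 - q.1) * (p.2 - q.2) :=
    fun p hp q hq => msupp_comonotone μ hbad hp hq
  have hspt0 : μ (msupp μ)ᶜ = 0 := measure_compl_msupp μ
  -- translation between P and μ
  have hXz : ∀ z : ℝ, μ {p : ℝ × ℝ | p.1 ≤ z} = P {ω | X ω ≤ z} := fun z => by
    rw [hμ, Measure.map_apply hfm
      (show MeasurableSet {p : ℝ × ℝ | p.1 ≤ z} from measurable_fst measurableSet_Iic)]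
    rfl
  have hYz : ∀ z : ℝ, μ {p : ℝ × ℝ | p.2 ≤ z} = P {ω | Y ω ≤ z} := fun z => by
    rw [hμ, Measure.map_apply hfm
      (show MeasurableSet {p : ℝ × ℝ | p.2 ≤ z} from measurable_snd measurableSet_Iic)]
    rfl
  have hSz : ∀ z : ℝ, μ {p : ℝ × ℝ | p.1 + p.2 ≤ z} = P {ω | X ω + Y ω ≤ z} := fun z => by
    rw [hμ, Measure.map_apply hfm
      (show MeasurableSet {p : ℝ × ℝ | p.1 + p.2 ≤ z} from
        (measurable_fst.add measurable_snd) measurableSet_Iic)]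
    rfl
  have hXYm : Measurable fun ω => X ω + Y ω := hX.add hY
  rw [MeasureTheory.ae_restrict_iff' measurableSet_Ioo]
  refine MeasureTheory.ae_of_all _ (fun t ht => ?_)
  obtain ⟨ht0, ht1⟩ := ht
  set a := quantile P X t with ha
  set b := quantile P Y t with hb
  refine le_antisymm ?_ ?_
  · -- quantile of sum ≤ a + b
    refine quantile_le P hXYm ht0 (fun z hz => ?_)
    set ε := (z - a - b) / 2 with hε
    have hεpos : 0 < ε := by simp only [hε]; linarith
    have hA : ENNReal.ofReal t < P {ω | X ω ≤ a + ε} :=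
      measure_gt_of_quantile_lt P hX ht0 ht1 (by linarith)
    have hB : ENNReal.ofReal t < P {ω | Y ω ≤ b + ε} :=
      measure_gt_of_quantile_lt P hY ht0 ht1 (by linarith)
    set A : Set (ℝ × ℝ) := {p : ℝ × ℝ | p.1 ≤ a + ε} with hAdef
    set B : Set (ℝ × ℝ) := {p : ℝ × ℝ | p.2 ≤ b + ε} with hBdef
    have hnest : A ∩ msupp μ ⊆ B ∩ msupp μ ∨ B ∩ msupp μ ⊆ A ∩ msupp μ := by
      by_contra hcon
      push_neg at hcon
      obtain ⟨h1, h2⟩ := hcon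
      rw [Set.not_subset] at h1 h2
      obtain ⟨p, hpA, hpB⟩ := h1
      obtain ⟨q, hqB, hqA⟩ := h2
      obtain ⟨hp1, hpΓ⟩ := hpA
      obtain ⟨hq2, hqΓ⟩ := hqB
      have hp2 : ¬ (b + ε ≥ p.2) := fun h => hpB ⟨h, hpΓ⟩
      have hq1 : ¬ (a + ε ≥ q.1) := fun h => hqA ⟨h, hqΓ⟩
      push_neg at hp2 hq1
      simp only [hAdef, hBdef, mem_setOf_eq] at hp1 hq2
      have hcc := hchain p hpΓ q hqΓ
      nlinarith
    have hkey : ENNReal.ofReal t < μ (A ∩ B ∩ msupp μ) := by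
      rcases hnest with hn | hn
      · have hsub : A ∩ msupp μ ⊆ A ∩ B ∩ msupp μ := fun x hx => ⟨⟨hx.1, (hn hx).1⟩, hx.2⟩
        refine lt_of_lt_of_le ?_ (measure_mono hsub)
        rw [measure_inter_conull hspt0, hAdef, hXz]
        exact hA
      · have hsub : B ∩ msupp μ ⊆ A ∩ B ∩ msupp μ := fun x hx => ⟨⟨(hn hx).1, hx.1⟩, hx.2⟩
        refine lt_of_lt_of_le ?_ (measure_mono hsub)
        rw [measure_inter_conull hspt0, hBdef, hYz]
        exact hB
    refine lt_of_lt_of_le hkey ?_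
    rw [← hSz z]
    refine measure_mono (fun p hp => ?_)
    obtain ⟨⟨hp1, hp2⟩, _⟩ := hp
    simp only [hAdef, hBdef, mem_setOf_eq] at hp1 hp2
    simp only [mem_setOf_eq]
    have hze : a + ε + (b + ε) = z := by simp only [hε]; ring
    linarith
  · -- a + b ≤ quantile of sum
    refine le_quantile P ht1 (fun z hz => ?_)
    set U₁ : Set (ℝ × ℝ) := {p : ℝ × ℝ | p.1 < a} with hU1def
    set U₂ : Set (ℝ × ℝ) := {p : ℝ × ℝ | p.2 < b} with hU2def
    have hC : {p : ℝ × ℝ | p.1 + p.2 ≤ z} ∩ msupp μ ⊆ (U₁ ∩ msupp μ) ∪ (U₂ ∩ msupp μ) := by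
      rintro p ⟨hpz, hpΓ⟩
      simp only [mem_setOf_eq] at hpz
      by_cases h1 : p.1 < a
      · exact Or.inl ⟨h1, hpΓ⟩
      · push_neg at h1
        refine Or.inr ⟨?_, hpΓ⟩
        simp only [hU2def, mem_setOf_eq]
        linarith
    have hnest : U₁ ∩ msupp μ ⊆ U₂ ∩ msupp μ ∨ U₂ ∩ msupp μ ⊆ U₁ ∩ msupp μ := by
      by_contra hcon
      push_neg at hcon
      obtain ⟨h1, h2⟩ := hcon
      rw [Set.not_subset] at h1 h2
      obtain ⟨p, hpA, hpB⟩ := h1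
      obtain ⟨q, hqB, hqA⟩ := h2
      obtain ⟨hp1, hpΓ⟩ := hpA
      obtain ⟨hq2, hqΓ⟩ := hqB
      have hp2 : ¬ (p.2 < b) := fun h => hpB ⟨h, hpΓ⟩
      have hq1 : ¬ (q.1 < a) := fun h => hqA ⟨h, hqΓ⟩
      push_neg at hp2 hq1
      simp only [hU1def, hU2def, mem_setOf_eq] at hp1 hq2
      have hcc := hchain p hpΓ q hqΓ
      nlinarith
    have hX' : μ U₁ ≤ ENNReal.ofReal t := by
      have h1 : μ U₁ = P {ω | X ω < a} := by
        rw [hμ, Measure.map_apply hfm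
          (show MeasurableSet U₁ from measurable_fst measurableSet_Iio)]
        rfl
      rw [h1]
      exact measure_lt_quantile_le P hX ht0
    have hY' : μ U₂ ≤ ENNReal.ofReal t := by
      have h1 : μ U₂ = P {ω | Y ω < b} := by
        rw [hμ, Measure.map_apply hfm
          (show MeasurableSet U₂ from measurable_snd measurableSet_Iio)]
        rfl
      rw [h1]
      exact measure_lt_quantile_le P hY ht0
    rw [← hSz z]
    calc μ {p : ℝ × ℝ | p.1 + p.2 ≤ z}
        = μ ({p : ℝ × ℝ | p.1 + p.2 ≤ z} ∩ msupp μ) := (measure_inter_conull hspt0).symm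
      _ ≤ ENNReal.ofReal t := by
          rcases hnest with hn | hn
          · have hsub : {p : ℝ × ℝ | p.1 + p.2 ≤ z} ∩ msupp μ ⊆ U₂ := by
              intro p hp
              rcases hC hp with h | h
              · exact (hn h).1
              · exact h.1
            exact le_trans (measure_mono hsub) hY'
          · have hsub : {p : ℝ × ℝ | p.1 + p.2 ≤ z} ∩ msupp μ ⊆ U₁ := by
              intro p hp
              rcases hC hp with h | h
              · exact h.1
              · exact (hn h).1
            exact le_trans (measure_mono hsub) hX'
end

section
/- If X₁ ≥ X₂ a.s. and P(X₁ > X₂) > 0, then Q_{X₁} ≥ Q_{X₂} everywhere on (0,1) and Q_{X₁}(t) > Q_{X₂}(t) for some t ∈ (0,1); moreover Q_{X₁} > Q_{X₂} on some right-neighborhood of t. -/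
open MeasureTheory Set Filter

lemma qset_nonempty_s7 {Ω : Type*} [MeasurableSpace Ω] (P : Measure Ω)
    [IsProbabilityMeasure P] (Y : Ω → ℝ) {t : ℝ} (ht : t < 1) :
    {z : ℝ | P {ω | Y ω ≤ z} > ENNReal.ofReal t}.Nonempty := by
  have hmono : Monotone (fun n : ℕ => {ω | Y ω ≤ (n : ℝ)}) := by
    intro n m hnm ω hω
    simp only [mem_setOf_eq] at hω ⊢
    calc Y ω ≤ (n : ℝ) := hω
      _ ≤ (m : ℝ) := by exact_mod_cast hnm
  have hun : (⋃ n : ℕ, {ω | Y ω ≤ (n : ℝ)}) = univ := by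
    ext ω
    simp only [mem_iUnion, mem_univ, iff_true, mem_setOf_eq]
    exact exists_nat_ge (Y ω)
  have htend := tendsto_measure_iUnion_atTop (μ := P) hmono
  rw [hun, measure_univ] at htend
  have hlt : ENNReal.ofReal t < 1 := ENNReal.ofReal_lt_one.mpr ht
  obtain ⟨n, hn⟩ := (htend.eventually_const_lt hlt).exists
  exact ⟨n, hn⟩

lemma qset_bddBelow_s7 {Ω : Type*} [MeasurableSpace Ω] (P : Measure Ω)
    [IsProbabilityMeasure P] (Y : Ω → ℝ) (hY : Measurable Y) {t : ℝ} (ht : 0 < t) :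
    BddBelow {z : ℝ | P {ω | Y ω ≤ z} > ENNReal.ofReal t} := by
  have hanti : Antitone (fun n : ℕ => {ω | Y ω ≤ -(n : ℝ)}) := by
    intro n m hnm ω hω
    simp only [mem_setOf_eq] at hω ⊢
    have : (n : ℝ) ≤ (m : ℝ) := by exact_mod_cast hnm
    linarith
  have hint : (⋂ n : ℕ, {ω | Y ω ≤ -(n : ℝ)}) = ∅ := by
    ext ω
    simp only [mem_iInter, mem_empty_iff_false, iff_false, mem_setOf_eq, not_forall, not_le]
    obtain ⟨n, hn⟩ := exists_nat_gt (-(Y ω))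
    exact ⟨n, by linarith⟩
  have htend := tendsto_measure_iInter_atTop (μ := P)
    (fun n => (measurableSet_le hY measurable_const).nullMeasurableSet) hanti ⟨0, measure_ne_top _ _⟩
  rw [hint, measure_empty] at htend
  have hlt : (0 : ENNReal) < ENNReal.ofReal t := ENNReal.ofReal_pos.mpr ht
  obtain ⟨n, hn⟩ := (htend.eventually_lt_const hlt).exists
  refine ⟨-(n : ℝ), fun z hz => ?_⟩
  by_contra hc
  push_neg at hc
  have hm : P {ω | Y ω ≤ z} ≤ P {ω | Y ω ≤ -(n : ℝ)} :=
    measure_mono fun ω hω => le_trans hω hc.le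
  exact absurd (lt_of_le_of_lt hm hn) (not_lt.mpr hz.le)

theorem stmt_7 {Ω : Type*} [MeasurableSpace Ω] (P : MeasureTheory.Measure Ω)
    [MeasureTheory.IsProbabilityMeasure P] (X₁ X₂ : Ω → ℝ)
    (hX₁ : Measurable X₁) (hX₂ : Measurable X₂)
    (hle : ∀ᵐ ω ∂P, X₂ ω ≤ X₁ ω) (hpos : 0 < P {ω | X₂ ω < X₁ ω}) :
    (∀ t ∈ Set.Ioo (0:ℝ) 1, quantile P X₂ t ≤ quantile P X₁ t) ∧
    ∃ t ∈ Set.Ioo (0:ℝ) 1, ∃ ε > 0, ∀ s ∈ Set.Ico t (t + ε),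
      s < 1 → quantile P X₂ s < quantile P X₁ s := by
  have hincl : ∀ z : ℝ, P {ω | X₁ ω ≤ z} ≤ P {ω | X₂ ω ≤ z} := by
    intro z
    apply measure_mono_ae
    filter_upwards [hle] with ω hω h
    exact le_trans hω h
  constructor
  · intro t ht
    apply csInf_le_csInf (qset_bddBelow_s7 P X₂ hX₂ ht.1) (qset_nonempty_s7 P X₁ ht.2)
    intro z hz
    exact lt_of_lt_of_le hz (hincl z)
  · have hcover : {ω | X₂ ω < X₁ ω} ⊆ ⋃ q : ℚ, {ω | X₂ ω ≤ (q : ℝ) ∧ (q : ℝ) < X₁ ω} := by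
      intro ω hω
      simp only [mem_setOf_eq] at hω
      obtain ⟨q, hq1, hq2⟩ := exists_rat_btwn hω
      exact mem_iUnion.mpr ⟨q, hq1.le, hq2⟩
    have hq : ∃ q : ℚ, 0 < P {ω | X₂ ω ≤ (q : ℝ) ∧ (q : ℝ) < X₁ ω} := by
      by_contra hc
      push_neg at hc
      simp only [nonpos_iff_eq_zero] at hc
      have : P {ω | X₂ ω < X₁ ω} = 0 :=
        measure_mono_null hcover (measure_iUnion_null hc)
      exact absurd this hpos.ne'
    obtain ⟨q, hδ⟩ := hq
    set A := {ω | X₂ ω ≤ (q : ℝ) ∧ (q : ℝ) < X₁ ω} with hA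
    set δ := P A with hδdef
    have hAmeas : MeasurableSet A :=
      (hX₂ measurableSet_Iic).inter (hX₁ measurableSet_Ioi)
    have hkey : P {ω | X₁ ω ≤ (q : ℝ)} + δ ≤ P {ω | X₂ ω ≤ (q : ℝ)} := by
      have hdisj : Disjoint {ω | X₁ ω ≤ (q : ℝ)} A := by
        rw [Set.disjoint_left]
        intro ω h1 h2
        exact absurd h2.2 (not_lt.mpr h1)
      have hsub : P ({ω | X₁ ω ≤ (q : ℝ)} ∪ A) ≤ P {ω | X₂ ω ≤ (q : ℝ)} := by
        apply measure_mono_ae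
        filter_upwards [hle] with ω hω h
        rcases h with h | h
        · exact le_trans hω h
        · exact h.1
      rw [← measure_union hdisj hAmeas]
      exact hsub
    set a := (P {ω | X₁ ω ≤ (q : ℝ)}).toReal with ha
    have hδne : δ ≠ ⊤ := measure_ne_top _ _
    have hδpos : 0 < δ.toReal := ENNReal.toReal_pos hδ.ne' hδne
    have hane : P {ω | X₁ ω ≤ (q : ℝ)} ≠ ⊤ := measure_ne_top _ _
    have ha0 : 0 ≤ a := ENNReal.toReal_nonneg
    have ha1 : a < 1 := by
      have h1 : P {ω | X₁ ω ≤ (q : ℝ)} < 1 :=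
        lt_of_lt_of_le (ENNReal.lt_add_right hane hδ.ne') (le_trans hkey prob_le_one)
      have := (ENNReal.toReal_lt_toReal hane ENNReal.one_ne_top).mpr h1
      simpa using this
    set d := min δ.toReal (1 - a) with hd
    have hdpos : 0 < d := lt_min hδpos (by linarith)
    have hd1 : d ≤ δ.toReal := min_le_left _ _
    have hd2 : d ≤ 1 - a := min_le_right _ _
    refine ⟨a + d/3, ⟨by linarith, by linarith⟩, d/3, by linarith, ?_⟩
    intro s hs hs1
    have hsa : a < s := lt_of_lt_of_le (by linarith) hs.1
    have hsub2 : s < a + δ.toReal := by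
      have h1 : s < a + d/3 + d/3 := hs.2
      linarith
    have hq2 : quantile P X₂ s ≤ q := by
      apply csInf_le (qset_bddBelow_s7 P X₂ hX₂ (lt_of_le_of_lt ha0 hsa))
      show ENNReal.ofReal s < P {ω | X₂ ω ≤ (q : ℝ)}
      refine lt_of_lt_of_le ?_ hkey
      calc ENNReal.ofReal s < ENNReal.ofReal (a + δ.toReal) :=
            (ENNReal.ofReal_lt_ofReal_iff (by linarith)).mpr hsub2
        _ = P {ω | X₁ ω ≤ (q : ℝ)} + δ := by
            rw [ENNReal.ofReal_add ha0 ENNReal.toReal_nonneg,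
              ENNReal.ofReal_toReal hane, ENNReal.ofReal_toReal hδne]
    have hrc : ∃ q' : ℝ, (q : ℝ) < q' ∧ P {ω | X₁ ω ≤ q'} < ENNReal.ofReal (a + d/3) := by
      have hanti : Antitone (fun n : ℕ => {ω | X₁ ω ≤ (q : ℝ) + 1/(n+1)}) := by
        intro n m hnm ω hω
        simp only [mem_setOf_eq] at hω ⊢
        have h1 : (1:ℝ)/(m+1) ≤ 1/(n+1) := by
          apply div_le_div_of_nonneg_left (by norm_num) (by positivity)
          exact_mod_cast add_le_add_left (Nat.cast_le.mpr hnm) 1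
        linarith
      have hint : (⋂ n : ℕ, {ω | X₁ ω ≤ (q : ℝ) + 1/(n+1)}) = {ω | X₁ ω ≤ (q : ℝ)} := by
        ext ω
        simp only [mem_iInter, mem_setOf_eq]
        constructor
        · intro h
          by_contra hc
          push_neg at hc
          obtain ⟨n, hn⟩ := exists_nat_one_div_lt (sub_pos.mpr hc)
          have := h n
          linarith
        · intro h n
          have : (0:ℝ) < 1/(n+1) := by positivity
          linarith
      have htend := tendsto_measure_iInter_atTop (μ := P)
        (fun n => (measurableSet_le hX₁ measurable_const).nullMeasurableSet) hanti ⟨0, measure_ne_top _ _⟩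
      rw [hint] at htend
      have hlt : P {ω | X₁ ω ≤ (q : ℝ)} < ENNReal.ofReal (a + d/3) := by
        rw [← ENNReal.ofReal_toReal hane]
        exact (ENNReal.ofReal_lt_ofReal_iff (by linarith)).mpr (by linarith)
      obtain ⟨n, hn⟩ := (htend.eventually_lt_const hlt).exists
      refine ⟨(q : ℝ) + 1/(n+1), ?_, hn⟩
      have : (0:ℝ) < 1/(n+1) := by positivity
      linarith
    obtain ⟨q', hqq', hq'⟩ := hrc
    have hq1 : q' ≤ quantile P X₁ s := by
      apply le_csInf (qset_nonempty_s7 P X₁ hs1)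
      intro z hz
      by_contra hc
      push_neg at hc
      have hm : P {ω | X₁ ω ≤ z} ≤ P {ω | X₁ ω ≤ q'} :=
        measure_mono fun ω hω => le_trans hω hc.le
      have h1 : ENNReal.ofReal (a + d/3) ≤ ENNReal.ofReal s :=
        ENNReal.ofReal_le_ofReal hs.1
      have h2 : P {ω | X₁ ω ≤ z} < ENNReal.ofReal s :=
        lt_of_le_of_lt hm (lt_of_lt_of_le hq' h1)
      exact absurd hz (not_lt.mpr h2.le)
    linarith
end

section
/- (Hardy–Littlewood lower bound) For nonnegative random variables X and ρ on a probability space, E[ρX] ≥ ∫₀¹ Q_X(s) Q_ρ(1-s) ds. -/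
open MeasureTheory Set Filter

section aux

variable {Ω : Type*} [MeasurableSpace Ω] (P : MeasureTheory.Measure Ω)
  [MeasureTheory.IsProbabilityMeasure P]

lemma measure_Yle_neg (Y : Ω → ℝ) (hY : ∀ ω, 0 ≤ Y ω) {z : ℝ} (hz : z < 0) :
    P {ω | Y ω ≤ z} = 0 := by
  have : {ω | Y ω ≤ z} = (∅ : Set Ω) := by
    ext ω; simp only [mem_setOf_eq, mem_empty_iff_false, iff_false, not_le]
    exact lt_of_lt_of_le hz (hY ω)
  rw [this]; simp

lemma quantile_set_subset (Y : Ω → ℝ) (hY : ∀ ω, 0 ≤ Y ω) (t : ℝ) :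
    {z : ℝ | P {ω | Y ω ≤ z} > ENNReal.ofReal t} ⊆ Set.Ici (0:ℝ) := by
  intro z hz
  by_contra h
  simp only [Set.mem_Ici, not_le] at h
  rw [mem_setOf_eq, measure_Yle_neg P Y hY h] at hz
  exact absurd hz (by simp)

lemma quantile_set_bddBelow (Y : Ω → ℝ) (hY : ∀ ω, 0 ≤ Y ω) (t : ℝ) :
    BddBelow {z : ℝ | P {ω | Y ω ≤ z} > ENNReal.ofReal t} :=
  ⟨0, fun z hz => quantile_set_subset P Y hY t hz⟩

lemma quantile_nonneg (Y : Ω → ℝ) (hY : ∀ ω, 0 ≤ Y ω) (t : ℝ) : 0 ≤ quantile P Y t :=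
  Real.sInf_nonneg fun z hz => quantile_set_subset P Y hY t hz

/-- If `u < quantile P Y s` with `0 < s` and `Y ≥ 0`, then `P {Y ≤ u} ≤ ofReal s`. -/
lemma measure_le_of_lt_quantile_s11 (Y : Ω → ℝ) (hY : ∀ ω, 0 ≤ Y ω) {s u : ℝ}
    (hs : 0 < s) (hu : u < quantile P Y s) : P {ω | Y ω ≤ u} ≤ ENNReal.ofReal s := by
  set S := {z : ℝ | P {ω | Y ω ≤ z} > ENNReal.ofReal s} with hS
  by_cases hu0 : u < 0
  · rw [measure_Yle_neg P Y hY hu0]; simp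
  push_neg at hu0
  have hbdd : BddBelow S := quantile_set_bddBelow P Y hY s
  have hne : S.Nonempty := by
    by_contra h
    rw [Set.not_nonempty_iff_eq_empty] at h
    have : quantile P Y s = 0 := by simp only [quantile, ← hS, h, Real.sInf_empty]
    rw [this] at hu
    exact absurd hu (not_lt.mpr hu0)
  have hq : quantile P Y s = sInf S := rfl
  rw [hq] at hu
  set z := (u + sInf S) / 2 with hz
  have hz1 : u < z := by rw [hz]; linarith
  have hz2 : z < sInf S := by rw [hz]; linarith
  have hzS : z ∉ S := fun h => absurd (csInf_le hbdd h) (not_le.mpr hz2)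
  have hle : P {ω | Y ω ≤ z} ≤ ENNReal.ofReal s := not_lt.mp hzS
  exact le_trans (measure_mono fun ω h => le_trans h hz1.le) hle

lemma quantile_monotoneOn (Y : Ω → ℝ) (hY : ∀ ω, 0 ≤ Y ω) :
    MonotoneOn (quantile P Y) (Set.Iio (1:ℝ)) := by
  intro s _ t ht hst
  have hsub : {z : ℝ | P {ω | Y ω ≤ z} > ENNReal.ofReal t}
      ⊆ {z : ℝ | P {ω | Y ω ≤ z} > ENNReal.ofReal s} :=
    fun z hz => lt_of_le_of_lt (ENNReal.ofReal_le_ofReal hst) hz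
  have hne : {z : ℝ | P {ω | Y ω ≤ z} > ENNReal.ofReal t}.Nonempty := by
    have hmono : Monotone (fun n : ℕ => {ω | Y ω ≤ (n:ℝ)}) := by
      intro m n hmn ω hω
      have hω' : Y ω ≤ (m:ℝ) := hω
      show Y ω ≤ (n:ℝ)
      exact le_trans hω' (by exact_mod_cast hmn)
    have huniv : (⋃ n : ℕ, {ω | Y ω ≤ (n:ℝ)}) = Set.univ := by
      ext ω; simp only [mem_iUnion, mem_setOf_eq, mem_univ, iff_true]
      exact exists_nat_ge (Y ω)
    have htend := tendsto_measure_iUnion_atTop (μ := P) hmono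
    rw [huniv, measure_univ] at htend
    have hlt : ENNReal.ofReal t < 1 := by
      calc ENNReal.ofReal t < ENNReal.ofReal 1 :=
            (ENNReal.ofReal_lt_ofReal_iff (by norm_num)).mpr ht
        _ = 1 := ENNReal.ofReal_one
    obtain ⟨n, hn⟩ := (htend.eventually (lt_mem_nhds hlt)).exists
    exact ⟨n, hn⟩
  exact csInf_le_csInf (quantile_set_bddBelow P Y hY s) hne hsub

/-- Product layer-cake representation. -/
lemma layercake_prod {α : Type*} [MeasurableSpace α] (μ : Measure α) [SFinite μ]
    {f g : α → ℝ} (hf : Measurable f) (hg : Measurable g) :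
    ∫⁻ a, ENNReal.ofReal (f a) * ENNReal.ofReal (g a) ∂μ
      = ∫⁻ uv : ℝ × ℝ, μ {a | uv.1 ∈ Set.Ioo 0 (f a) ∧ uv.2 ∈ Set.Ioo 0 (g a)}
          ∂((volume : Measure ℝ).prod volume) := by
  set T : Set (α × ℝ × ℝ) :=
    {p | p.2.1 ∈ Set.Ioo 0 (f p.1) ∧ p.2.2 ∈ Set.Ioo 0 (g p.1)} with hT
  have hTm : MeasurableSet T := by
    have h1 : MeasurableSet {p : α × ℝ × ℝ | 0 < p.2.1} :=
      measurableSet_lt measurable_const (measurable_fst.comp measurable_snd)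
    have h2 : MeasurableSet {p : α × ℝ × ℝ | p.2.1 < f p.1} :=
      measurableSet_lt (measurable_fst.comp measurable_snd) (hf.comp measurable_fst)
    have h3 : MeasurableSet {p : α × ℝ × ℝ | 0 < p.2.2} :=
      measurableSet_lt measurable_const (measurable_snd.comp measurable_snd)
    have h4 : MeasurableSet {p : α × ℝ × ℝ | p.2.2 < g p.1} :=
      measurableSet_lt (measurable_snd.comp measurable_snd) (hg.comp measurable_fst)
    have : T = ({p : α × ℝ × ℝ | 0 < p.2.1} ∩ {p | p.2.1 < f p.1}) ∩
        ({p | 0 < p.2.2} ∩ {p | p.2.2 < g p.1}) := by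
      ext p; simp only [hT, mem_setOf_eq, mem_inter_iff, Set.mem_Ioo]
    rw [this]
    exact ((h1.inter h2).inter (h3.inter h4))
  have hsec : ∀ a, (Prod.mk a ⁻¹' T) = Set.Ioo 0 (f a) ×ˢ Set.Ioo 0 (g a) := fun a => rfl
  calc ∫⁻ a, ENNReal.ofReal (f a) * ENNReal.ofReal (g a) ∂μ
      = ∫⁻ a, ((volume : Measure ℝ).prod volume) (Prod.mk a ⁻¹' T) ∂μ := by
        apply lintegral_congr
        intro a
        simp [hsec a, Measure.prod_prod, Real.volume_Ioo]
    _ = (μ.prod ((volume : Measure ℝ).prod volume)) T := (Measure.prod_apply hTm).symm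
    _ = ∫⁻ uv : ℝ × ℝ, μ ((fun a => (a, uv)) ⁻¹' T) ∂((volume : Measure ℝ).prod volume) :=
        Measure.prod_apply_symm hTm
    _ = ∫⁻ uv : ℝ × ℝ, μ {a | uv.1 ∈ Set.Ioo 0 (f a) ∧ uv.2 ∈ Set.Ioo 0 (g a)}
          ∂((volume : Measure ℝ).prod volume) := by
        apply lintegral_congr
        intro uv
        congr 1

end aux

theorem stmt_11 {Ω : Type*} [MeasurableSpace Ω] (P : MeasureTheory.Measure Ω)
    [MeasureTheory.IsProbabilityMeasure P] (X ρ : Ω → ℝ)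
    (hX : Measurable X) (hρ : Measurable ρ)
    (hXnn : ∀ ω, 0 ≤ X ω) (hρnn : ∀ ω, 0 ≤ ρ ω) :
    ∫⁻ s in Set.Ioo (0:ℝ) 1, ENNReal.ofReal (quantile P X s * quantile P ρ (1 - s))
      ≤ ∫⁻ ω, ENNReal.ofReal (ρ ω * X ω) ∂P := by
  set A : ℝ → ℝ := fun s => quantile P X s with hA
  set B : ℝ → ℝ := fun s => quantile P ρ (1 - s) with hB
  set μ₀ : Measure ℝ := volume.restrict (Set.Ioo (0:ℝ) 1) with hμ₀
  -- a.e. measurability of A and B on (0,1)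
  have hAmono : MonotoneOn A (Set.Ioo (0:ℝ) 1) :=
    (quantile_monotoneOn P X hXnn).mono (fun s hs => hs.2)
  have hBanti : AntitoneOn B (Set.Ioo (0:ℝ) 1) := by
    intro s hs t ht hst
    exact quantile_monotoneOn P ρ hρnn (by simp only [Set.mem_Iio]; linarith [ht.1])
      (by simp only [Set.mem_Iio]; linarith [hs.1]) (by linarith)
  have hAae : AEMeasurable A μ₀ := aemeasurable_restrict_of_monotoneOn measurableSet_Ioo hAmono
  have hBae : AEMeasurable B μ₀ := aemeasurable_restrict_of_antitoneOn measurableSet_Ioo hBanti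
  set A₀ := hAae.mk A with hA₀
  set B₀ := hBae.mk B with hB₀
  -- the key section-measure comparison
  have key : ∀ uv : ℝ × ℝ,
      μ₀ {s | uv.1 ∈ Set.Ioo 0 (A₀ s) ∧ uv.2 ∈ Set.Ioo 0 (B₀ s)}
        ≤ P {ω | uv.1 ∈ Set.Ioo 0 (X ω) ∧ uv.2 ∈ Set.Ioo 0 (ρ ω)} := by
    rintro ⟨u, v⟩
    have hsets : μ₀ {s | u ∈ Set.Ioo 0 (A₀ s) ∧ v ∈ Set.Ioo 0 (B₀ s)}
        = μ₀ {s | u ∈ Set.Ioo 0 (A s) ∧ v ∈ Set.Ioo 0 (B s)} := by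
      apply measure_congr
      rw [Filter.eventuallyEq_set]
      filter_upwards [hAae.ae_eq_mk, hBae.ae_eq_mk] with s h1 h2
      simp only [mem_setOf_eq, hA₀, hB₀, ← h1, ← h2]
    rw [hsets]
    by_cases huv : 0 < u ∧ 0 < v
    · obtain ⟨hu, hv⟩ := huv
      -- reduce Ioo membership
      have hset1 : {s : ℝ | u ∈ Set.Ioo 0 (A s) ∧ v ∈ Set.Ioo 0 (B s)}
          = {s : ℝ | u < A s ∧ v < B s} := by
        ext s; simp only [mem_setOf_eq, Set.mem_Ioo]; tauto
      have hset2 : {ω : Ω | u ∈ Set.Ioo 0 (X ω) ∧ v ∈ Set.Ioo 0 (ρ ω)}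
          = {ω : Ω | u < X ω ∧ v < ρ ω} := by
        ext ω; simp only [mem_setOf_eq, Set.mem_Ioo]; tauto
      rw [hset1, hset2]
      set p := P {ω | X ω ≤ u} with hp
      set q := P {ω | ρ ω ≤ v} with hq
      have hp1 : p ≤ 1 := prob_le_one
      have hq1 : q ≤ 1 := prob_le_one
      have hpt : p ≠ ⊤ := (lt_of_le_of_lt hp1 ENNReal.one_lt_top).ne
      have hqt : q ≠ ⊤ := (lt_of_le_of_lt hq1 ENNReal.one_lt_top).ne
      have hsub : {s : ℝ | u < A s ∧ v < B s} ∩ Set.Ioo (0:ℝ) 1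
          ⊆ Set.Icc p.toReal (1 - q.toReal) := by
        rintro s ⟨⟨h1, h2⟩, hs0, hs1⟩
        have hps : p ≤ ENNReal.ofReal s := measure_le_of_lt_quantile_s11 P X hXnn hs0 h1
        have hqs : q ≤ ENNReal.ofReal (1 - s) :=
          measure_le_of_lt_quantile_s11 P ρ hρnn (by linarith) h2
        constructor
        · exact (ENNReal.le_ofReal_iff_toReal_le hpt hs0.le).mp hps
        · have := (ENNReal.le_ofReal_iff_toReal_le hqt (by linarith)).mp hqs
          linarith
      have hres : μ₀ {s : ℝ | u < A s ∧ v < B s}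
          = volume ({s : ℝ | u < A s ∧ v < B s} ∩ Set.Ioo (0:ℝ) 1) :=
        Measure.restrict_apply' measurableSet_Ioo
      have hmeas1 : volume ({s : ℝ | u < A s ∧ v < B s} ∩ Set.Ioo (0:ℝ) 1)
          ≤ ENNReal.ofReal (1 - q.toReal - p.toReal) := by
        calc volume ({s : ℝ | u < A s ∧ v < B s} ∩ Set.Ioo (0:ℝ) 1)
            ≤ volume (Set.Icc p.toReal (1 - q.toReal)) := measure_mono hsub
          _ = ENNReal.ofReal (1 - q.toReal - p.toReal) := Real.volume_Icc
      have heq : ENNReal.ofReal (1 - q.toReal - p.toReal) = 1 - q - p := by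
        rw [ENNReal.ofReal_sub _ ENNReal.toReal_nonneg,
          ENNReal.ofReal_sub _ ENNReal.toReal_nonneg,
          ENNReal.ofReal_one, ENNReal.ofReal_toReal hpt, ENNReal.ofReal_toReal hqt]
      have hP : 1 - q - p ≤ P {ω : Ω | u < X ω ∧ v < ρ ω} := by
        rw [tsub_le_iff_right, tsub_le_iff_right]
        have hcover : (Set.univ : Set Ω)
            ⊆ {ω : Ω | u < X ω ∧ v < ρ ω} ∪ ({ω | X ω ≤ u} ∪ {ω | ρ ω ≤ v}) := by
          intro ω _
          by_cases h1 : X ω ≤ u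
          · exact Or.inr (Or.inl h1)
          by_cases h2 : ρ ω ≤ v
          · exact Or.inr (Or.inr h2)
          · exact Or.inl ⟨not_le.mp h1, not_le.mp h2⟩
        calc (1 : ENNReal) = P Set.univ := measure_univ.symm
          _ ≤ P ({ω : Ω | u < X ω ∧ v < ρ ω} ∪ ({ω | X ω ≤ u} ∪ {ω | ρ ω ≤ v})) :=
              measure_mono hcover
          _ ≤ P {ω : Ω | u < X ω ∧ v < ρ ω} + P ({ω | X ω ≤ u} ∪ {ω | ρ ω ≤ v}) :=
              measure_union_le _ _
          _ ≤ P {ω : Ω | u < X ω ∧ v < ρ ω} + (p + q) :=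
              add_le_add le_rfl (measure_union_le _ _)
          _ = P {ω : Ω | u < X ω ∧ v < ρ ω} + p + q := by ring
      calc μ₀ {s : ℝ | u < A s ∧ v < B s}
          ≤ ENNReal.ofReal (1 - q.toReal - p.toReal) := by rw [hres]; exact hmeas1
        _ = 1 - q - p := heq
        _ ≤ P {ω : Ω | u < X ω ∧ v < ρ ω} := hP
    · have : {s : ℝ | u ∈ Set.Ioo 0 (A s) ∧ v ∈ Set.Ioo 0 (B s)} = (∅ : Set ℝ) := by
        ext s
        simp only [mem_setOf_eq, Set.mem_Ioo, mem_empty_iff_false, iff_false]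
        rintro ⟨⟨hu, _⟩, ⟨hv, _⟩⟩
        exact huv ⟨hu, hv⟩
      rw [this]; simp
  -- put everything together
  have hstep1 : ∫⁻ s in Set.Ioo (0:ℝ) 1, ENNReal.ofReal (A s * B s)
      = ∫⁻ s, ENNReal.ofReal (A₀ s) * ENNReal.ofReal (B₀ s) ∂μ₀ := by
    apply lintegral_congr_ae
    filter_upwards [hAae.ae_eq_mk, hBae.ae_eq_mk] with s h1 h2
    simp only [hA₀, hB₀, ← h1, ← h2]
    exact ENNReal.ofReal_mul (quantile_nonneg P X hXnn s)
  have hstep2 : ∫⁻ ω, ENNReal.ofReal (ρ ω * X ω) ∂P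
      = ∫⁻ ω, ENNReal.ofReal (X ω) * ENNReal.ofReal (ρ ω) ∂P := by
    apply lintegral_congr
    intro ω
    rw [mul_comm (ρ ω), ENNReal.ofReal_mul (hXnn ω)]
  calc ∫⁻ s in Set.Ioo (0:ℝ) 1, ENNReal.ofReal (A s * B s)
      = ∫⁻ s, ENNReal.ofReal (A₀ s) * ENNReal.ofReal (B₀ s) ∂μ₀ := hstep1
    _ = ∫⁻ uv : ℝ × ℝ, μ₀ {s | uv.1 ∈ Set.Ioo 0 (A₀ s) ∧ uv.2 ∈ Set.Ioo 0 (B₀ s)}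
          ∂((volume : Measure ℝ).prod volume) :=
        layercake_prod μ₀ hAae.measurable_mk hBae.measurable_mk
    _ ≤ ∫⁻ uv : ℝ × ℝ, P {ω | uv.1 ∈ Set.Ioo 0 (X ω) ∧ uv.2 ∈ Set.Ioo 0 (ρ ω)}
          ∂((volume : Measure ℝ).prod volume) := lintegral_mono key
    _ = ∫⁻ ω, ENNReal.ofReal (X ω) * ENNReal.ofReal (ρ ω) ∂P := (layercake_prod P hX hρ).symm
    _ = ∫⁻ ω, ENNReal.ofReal (ρ ω * X ω) ∂P := hstep2.symm
end

section
/- Let H : [0,1] → ℝ be absolutely continuous with H ≥ 0, H(1) = 0, and let Q̄ : (0,1) → [0,∞) be nondecreasing right-continuous with Q̄(0+) = 0 satisfying ∫₀¹ H'(t) Q̄(t) dt = 0. Then Q̄ is constant on every interval (a,b] ⊂ (0,1) on which H > 0. -/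
open MeasureTheory Set

theorem stmt_18 (H H' Qb : ℝ → ℝ)
    (hint : MeasureTheory.IntegrableOn H' (Set.Icc 0 1))
    (hFTC : ∀ a ∈ Set.Icc (0:ℝ) 1, H a = H 0 + ∫ t in Set.Ioc 0 a, H' t)
    (hHnn : ∀ t ∈ Set.Icc (0:ℝ) 1, 0 ≤ H t) (hH1 : H 1 = 0)
    (hQmono : MonotoneOn Qb (Set.Ioo 0 1))
    (hQrc : ∀ t ∈ Set.Ioo (0:ℝ) 1, ContinuousWithinAt Qb (Set.Ici t) t)
    (hQnn : ∀ t ∈ Set.Ioo (0:ℝ) 1, 0 ≤ Qb t)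
    (hQ0 : Filter.Tendsto Qb (nhdsWithin 0 (Set.Ioi 0)) (nhds 0))
    (hQint : MeasureTheory.IntegrableOn (fun t => H' t * Qb t) (Set.Ioo 0 1))
    (hzero : ∫ t in Set.Ioo (0:ℝ) 1, H' t * Qb t = 0) :
    ∀ a b : ℝ, 0 < a → a < b → b < 1 → (∀ t ∈ Set.Ioc a b, 0 < H t) →
      ∀ s₁ ∈ Set.Ioc a b, ∀ s₂ ∈ Set.Ioc a b, Qb s₁ = Qb s₂ := by
  intro a b ha hab hb hHpos s₁ hs₁ s₂ hs₂
  suffices key : ∀ u ∈ Set.Ioc a b, ∀ v ∈ Set.Ioc a b, ¬ Qb u < Qb v by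
    rcases lt_trichotomy (Qb s₁) (Qb s₂) with h | h | h
    · exact absurd h (key _ hs₁ _ hs₂)
    · exact h
    · exact absurd h (key _ hs₂ _ hs₁)
  intro u hu v hv hlt
  have hIoc : Set.Ioc a b ⊆ Set.Ioo 0 1 := fun t ht =>
    ⟨ha.trans ht.1, lt_of_le_of_lt ht.2 hb⟩
  have hu1 : u ∈ Set.Ioo (0:ℝ) 1 := hIoc hu
  have hv1 : v ∈ Set.Ioo (0:ℝ) 1 := hIoc hv
  set μ1 : Measure ℝ := volume.restrict (Set.Ioo 0 1) with hμ1def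
  set μ2 : Measure ℝ := volume.restrict (Set.Ioi 0) with hμ2def
  -- measurable versions
  have hQaem : AEMeasurable Qb μ1 :=
    aemeasurable_restrict_of_monotoneOn measurableSet_Ioo hQmono
  obtain ⟨g, hgm, hgae⟩ := hQaem
  have hH'aesm : AEStronglyMeasurable H' μ1 :=
    hint.aestronglyMeasurable.mono_measure
      (Measure.restrict_mono Set.Ioo_subset_Icc_self le_rfl)
  obtain ⟨g', hg'm, hg'ae⟩ := hH'aesm
  -- the product function
  set F : ℝ × ℝ → ℝ := fun p => if p.2 < Qb p.1 then H' p.1 else 0 with hFdef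
  set F' : ℝ × ℝ → ℝ := fun p => if p.2 < g p.1 then g' p.1 else 0 with hF'def
  have hF'sm : StronglyMeasurable F' := by
    apply Measurable.stronglyMeasurable
    have hset : MeasurableSet {p : ℝ × ℝ | p.2 < g p.1} :=
      measurableSet_lt measurable_snd (hgm.comp measurable_fst)
    exact Measurable.ite hset (hg'm.measurable.comp measurable_fst) measurable_const
  have hFF' : F =ᵐ[μ1.prod μ2] F' := by
    have h1 : ∀ᵐ t ∂μ1, Qb t = g t ∧ H' t = g' t := hgae.and hg'ae
    have h2 : ∀ᵐ p ∂(μ1.prod μ2), Qb p.1 = g p.1 ∧ H' p.1 = g' p.1 :=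
      Measure.quasiMeasurePreserving_fst.ae h1
    filter_upwards [h2] with p hp
    simp only [hFdef, hF'def, hp.1, hp.2]
  have hFsm : AEStronglyMeasurable F (μ1.prod μ2) :=
    hF'sm.aestronglyMeasurable.congr hFF'.symm
  -- slice integrals in y
  have hslice : ∀ t ∈ Set.Ioo (0:ℝ) 1,
      Integrable (fun y => F (t, y)) μ2 ∧
      (∫ y, F (t, y) ∂μ2) = H' t * Qb t ∧
      (∫ y, ‖F (t, y)‖ ∂μ2) = ‖H' t * Qb t‖ := by
    intro t ht
    have hq : 0 ≤ Qb t := hQnn t ht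
    have hfeq : (fun y => F (t, y)) = (Set.Iio (Qb t)).indicator (fun _ => H' t) := by
      funext y
      simp only [hFdef, Set.indicator_apply, Set.mem_Iio]
    have hμIio : μ2 (Set.Iio (Qb t)) = ENNReal.ofReal (Qb t) := by
      rw [hμ2def, Measure.restrict_apply measurableSet_Iio]
      rw [Set.Iio_inter_Ioi, Real.volume_Ioo, sub_zero]
    have hμlt : μ2 (Set.Iio (Qb t)) < ⊤ := by rw [hμIio]; exact ENNReal.ofReal_lt_top
    constructor
    · rw [hfeq]
      exact (integrable_indicator_iff measurableSet_Iio).2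
        (integrableOn_const hμlt.ne)
    constructor
    · rw [hfeq, integral_indicator measurableSet_Iio, setIntegral_const,
        Measure.real, Measure.restrict_apply measurableSet_Iio]
      rw [Set.Iio_inter_Ioi, Real.volume_Ioo, sub_zero, ENNReal.toReal_ofReal hq,
        smul_eq_mul, mul_comm]
    · have : (fun y => ‖F (t, y)‖) = (Set.Iio (Qb t)).indicator (fun _ => ‖H' t‖) := by
        funext y
        have h : F (t, y) = (Set.Iio (Qb t)).indicator (fun _ => H' t) y :=
          congrFun hfeq y
        rw [h, norm_indicator_eq_indicator_norm]
      rw [this, integral_indicator measurableSet_Iio, setIntegral_const,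
        Measure.real, Measure.restrict_apply measurableSet_Iio]
      rw [Set.Iio_inter_Ioi, Real.volume_Ioo, sub_zero, ENNReal.toReal_ofReal hq,
        smul_eq_mul, mul_comm, norm_mul, Real.norm_eq_abs (Qb t), abs_of_nonneg hq]
  have haemem : ∀ᵐ t ∂μ1, t ∈ Set.Ioo (0:ℝ) 1 := ae_restrict_mem measurableSet_Ioo
  -- product integrability
  have hFint : Integrable F (μ1.prod μ2) := by
    rw [integrable_prod_iff hFsm]
    constructor
    · filter_upwards [haemem] with t ht using (hslice t ht).1
    · apply (hQint.norm).congr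
      filter_upwards [haemem] with t ht
      exact ((hslice t ht).2.2).symm
  -- Fubini
  have hswap : (∫ t, ∫ y, F (t, y) ∂μ2 ∂μ1) = ∫ y, ∫ t, F (t, y) ∂μ1 ∂μ2 :=
    integral_integral_swap hFint
  have hLHS : (∫ t, ∫ y, F (t, y) ∂μ2 ∂μ1) = 0 := by
    rw [← hzero]
    apply integral_congr_ae
    filter_upwards [haemem] with t ht using (hslice t ht).2.1
  -- the function τ
  set S : ℝ → Set ℝ := fun y => {t | t ∈ Set.Ioo (0:ℝ) 1 ∧ y < Qb t} with hSdef
  set τ : ℝ → ℝ := fun y => sInf (S y ∪ {1}) with hτdef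
  have hSne : ∀ y, (S y ∪ {1}).Nonempty := fun y => ⟨1, Or.inr rfl⟩
  have hSbdd : ∀ y, BddBelow (S y ∪ {1}) := by
    intro y
    refine ⟨0, fun w hw => ?_⟩
    rcases hw with hw | hw
    · exact le_of_lt hw.1.1
    · simp only [Set.mem_singleton_iff] at hw; rw [hw]; norm_num
  have hτmem : ∀ y, τ y ∈ Set.Icc (0:ℝ) 1 := by
    intro y
    constructor
    · apply le_csInf (hSne y)
      intro w hw
      rcases hw with hw | hw
      · exact le_of_lt hw.1.1
      · simp only [Set.mem_singleton_iff] at hw; rw [hw]; norm_num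
    · exact csInf_le (hSbdd y) (Or.inr rfl)
  have hτlt : ∀ y, ∀ t ∈ Set.Ioo (0:ℝ) 1, τ y < t → y < Qb t := by
    intro y t ht h
    obtain ⟨w, hw, hwt⟩ := exists_lt_of_csInf_lt (hSne y) h
    rcases hw with hw | hw
    · exact lt_of_lt_of_le hw.2 (hQmono hw.1 ht (le_of_lt hwt))
    · simp only [Set.mem_singleton_iff] at hw
      rw [hw] at hwt
      exact absurd ht.2 (not_lt.2 (le_of_lt hwt))
  have hτle : ∀ y, ∀ t ∈ Set.Ioo (0:ℝ) 1, y < Qb t → τ y ≤ t :=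
    fun y t ht hyq => csInf_le (hSbdd y) (Or.inl ⟨ht, hyq⟩)
  -- value of H at interval integrals
  have hHval : ∀ c ∈ Set.Icc (0:ℝ) 1, (∫ t in Set.Ioo c 1, H' t) = - H c := by
    intro c hc
    have h1 : (∫ t in Set.Ioo c 1, H' t) = ∫ t in Set.Ioc c 1, H' t :=
      (integral_Ioc_eq_integral_Ioo).symm
    have hunion : Set.Ioc (0:ℝ) c ∪ Set.Ioc c 1 = Set.Ioc 0 1 :=
      Set.Ioc_union_Ioc_eq_Ioc hc.1 hc.2
    have hdisj : Disjoint (Set.Ioc (0:ℝ) c) (Set.Ioc c 1) := Set.Ioc_disjoint_Ioc_of_le le_rfl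
    have hi1 : IntegrableOn H' (Set.Ioc (0:ℝ) c) volume :=
      hint.mono_set (fun t ht => ⟨le_of_lt ht.1, le_trans ht.2 hc.2⟩)
    have hi2 : IntegrableOn H' (Set.Ioc c 1) volume :=
      hint.mono_set (fun t ht => ⟨le_trans hc.1 (le_of_lt ht.1), ht.2⟩)
    have hsum : (∫ t in Set.Ioc (0:ℝ) 1, H' t)
        = (∫ t in Set.Ioc (0:ℝ) c, H' t) + ∫ t in Set.Ioc c 1, H' t := by
      rw [← hunion, setIntegral_union hdisj measurableSet_Ioc hi1 hi2]
    have e1 := hFTC 1 (by norm_num)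
    have e2 := hFTC c hc
    rw [h1]
    rw [hH1] at e1
    linarith
  -- compute the inner integral over t
  have hinner : ∀ y : ℝ, (∫ t, F (t, y) ∂μ1) = - H (τ y) := by
    intro y
    have heq : (fun t => F (t, y)) =ᵐ[μ1] (Set.Ioi (τ y)).indicator H' := by
      have hne : ∀ᵐ t ∂(volume : Measure ℝ), t ≠ τ y := by
        rw [ae_iff]
        simp only [ne_eq, not_not]
        have hs : {x : ℝ | x = τ y} = {τ y} := by ext; simp
        rw [hs]
        exact Real.volume_singleton
      filter_upwards [haemem, ae_restrict_of_ae hne] with t ht htne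
      simp only [hFdef, Set.indicator_apply, Set.mem_Ioi]
      by_cases hcase : y < Qb t
      · rw [if_pos hcase, if_pos (lt_of_le_of_ne (hτle y t ht hcase) (Ne.symm htne))]
      · rw [if_neg hcase, if_neg]
        intro hcon
        exact hcase (hτlt y t ht hcon)
    rw [integral_congr_ae heq, integral_indicator measurableSet_Ioi]
    have hτy := hτmem y
    have hrestr : μ1.restrict (Set.Ioi (τ y)) = volume.restrict (Set.Ioo (τ y) 1) := by
      rw [hμ1def, Measure.restrict_restrict measurableSet_Ioi]
      congr 1
      ext t
      simp only [Set.mem_inter_iff, Set.mem_Ioi, Set.mem_Ioo]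
      constructor
      · rintro ⟨h1, h2, h3⟩; exact ⟨h1, h3⟩
      · rintro ⟨h1, h2⟩; exact ⟨h1, lt_of_le_of_lt hτy.1 h1, h2⟩
    rw [hrestr]
    exact hHval (τ y) hτy
  -- conclude : ∫ y in Ioi 0, H (τ y) = 0 with nonneg integrand
  have hIint : Integrable (fun y => ∫ t, F (t, y) ∂μ1) μ2 := hFint.integral_prod_right
  have hIint' : Integrable (fun y => H (τ y)) μ2 := by
    have : (fun y => H (τ y)) = fun y => -(∫ t, F (t, y) ∂μ1) := by
      funext y; rw [hinner y]; ring
    rw [this]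
    exact hIint.neg
  have hIzero : (∫ y, H (τ y) ∂μ2) = 0 := by
    have h1 : (∫ y, ∫ t, F (t, y) ∂μ1 ∂μ2) = 0 := by rw [← hswap]; exact hLHS
    have h2 : (∫ y, ∫ t, F (t, y) ∂μ1 ∂μ2) = ∫ y, -H (τ y) ∂μ2 := by
      apply integral_congr_ae
      filter_upwards with y using hinner y
    rw [h2, integral_neg] at h1
    linarith
  have hae0 : ∀ᵐ y ∂μ2, H (τ y) = 0 := by
    have := (integral_eq_zero_iff_of_nonneg (fun y => hHnn (τ y) (hτmem y)) hIint').1 hIzero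
    filter_upwards [this] with y hy using hy
  -- contradiction on the interval (Qb u, Qb v)
  have hqu0 : 0 ≤ Qb u := hQnn u hu1
  have hJpos : ∀ y ∈ Set.Ioo (Qb u) (Qb v), 0 < H (τ y) := by
    intro y hy
    have hτv : τ y ≤ v := hτle y v hv1 hy.2
    have hτu : u ≤ τ y := by
      apply le_csInf (hSne y)
      intro w hw
      rcases hw with hw | hw
      · by_contra hcon
        push_neg at hcon
        exact absurd (lt_of_le_of_lt (hQmono hw.1 hu1 (le_of_lt hcon)) hy.1)
          (not_lt.2 (le_of_lt hw.2))
      · simp only [Set.mem_singleton_iff] at hw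
        rw [hw]; exact le_of_lt (lt_of_le_of_lt hu.2 hb)
    exact hHpos (τ y) ⟨lt_of_lt_of_le hu.1 hτu, le_trans hτv hv.2⟩
  have hnull : μ2 {y | ¬ H (τ y) = 0} = 0 := ae_iff.mp hae0
  have hsub : Set.Ioo (Qb u) (Qb v) ⊆ {y | ¬ H (τ y) = 0} := fun y hy =>
    ne_of_gt (hJpos y hy)
  have hJ0 : μ2 (Set.Ioo (Qb u) (Qb v)) = 0 := measure_mono_null hsub hnull
  have hJval : μ2 (Set.Ioo (Qb u) (Qb v)) = ENNReal.ofReal (Qb v - Qb u) := by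
    rw [hμ2def, Measure.restrict_apply measurableSet_Ioo]
    have : Set.Ioo (Qb u) (Qb v) ∩ Set.Ioi 0 = Set.Ioo (Qb u) (Qb v) := by
      apply Set.inter_eq_self_of_subset_left
      intro y hy
      exact lt_of_le_of_lt hqu0 hy.1
    rw [this, Real.volume_Ioo]
  rw [hJval] at hJ0
  have : 0 < Qb v - Qb u := sub_pos.2 hlt
  rw [ENNReal.ofReal_eq_zero] at hJ0
  linarith
end
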